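/- arXiv:2306.13360 — 2 statements merged into one kernel-verified Lean document; each statement's English description precedes it below -/
import Mathlib

section
/- Let C be a closed cone in a finite-dimensional real inner product space and Y a point. Then Ŷ ∈ C minimizes ‖Z − Y‖² over Z ∈ C if and only if Ŷ maximizes ‖Z‖ over the set {Z ∈ C : ⟨Y, Z⟩ = ‖Z‖²}. -/
lemma proj_expand_aux {H : Type*} [NormedAddCommGroup H] [InnerProductSpace ℝ H]
    (Z Y : H) : ‖Z - Y‖ ^ 2 = ‖Z‖ ^ 2 - 2 * (inner ℝ Y Z : ℝ) + ‖Y‖ ^ 2 := by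
  rw [norm_sub_sq_real, real_inner_comm]

lemma proj_expand_smul {H : Type*} [NormedAddCommGroup H] [InnerProductSpace ℝ H]
    (t : ℝ) (Z Y : H) :
    ‖t • Z - Y‖ ^ 2 = t ^ 2 * ‖Z‖ ^ 2 - 2 * t * (inner ℝ Y Z : ℝ) + ‖Y‖ ^ 2 := by
  rw [proj_expand_aux, real_inner_smul_right, norm_smul]
  have h : ‖t‖ ^ 2 = t ^ 2 := by rw [Real.norm_eq_abs, sq_abs]
  rw [mul_pow, h]; ring

/-- Reformulation of the projection onto a closed cone: `Ŷ ∈ C` minimizes `‖Z − Y‖²`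
over `Z ∈ C` if and only if `Ŷ` maximizes `‖Z‖` over `{Z ∈ C : ⟨Y, Z⟩ = ‖Z‖²}`. -/
theorem proj_closed_cone_max_reformulation {H : Type*} [NormedAddCommGroup H]
    [InnerProductSpace ℝ H] [FiniteDimensional ℝ H] (C : Set H)
    (hne : C.Nonempty) (hclosed : IsClosed C) (hzero : (0 : H) ∈ C)
    (hcone : ∀ t : ℝ, 0 ≤ t → ∀ z ∈ C, t • z ∈ C) (Y Yhat : H) :
    (Yhat ∈ C ∧ ∀ Z ∈ C, ‖Yhat - Y‖ ^ 2 ≤ ‖Z - Y‖ ^ 2) ↔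
      (Yhat ∈ C ∧ (inner ℝ Y Yhat : ℝ) = ‖Yhat‖ ^ 2 ∧
        ∀ Z ∈ C, (inner ℝ Y Z : ℝ) = ‖Z‖ ^ 2 → ‖Z‖ ≤ ‖Yhat‖) := by
  constructor
  · rintro ⟨hC, hmin⟩
    have hkey : ∀ t : ℝ, 0 ≤ t → ‖Yhat - Y‖ ^ 2 ≤ ‖t • Yhat - Y‖ ^ 2 :=
      fun t ht => hmin _ (hcone t ht _ hC)
    set a := ‖Yhat‖ ^ 2 with ha
    set b := (inner ℝ Y Yhat : ℝ) with hb
    have hE : ‖Yhat - Y‖ ^ 2 = a - 2 * b + ‖Y‖ ^ 2 := proj_expand_aux Yhat Y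
    have hab : b = a := by
      have ha0 : 0 ≤ a := sq_nonneg _
      rcases eq_or_lt_of_le ha0 with h0 | hpos
      · have hn : ‖Yhat‖ = 0 := by nlinarith [sq_nonneg ‖Yhat‖]
        have hy0 : Yhat = 0 := norm_eq_zero.mp hn
        simp [hb, hy0, ha, hn]
      · have h0 := hkey 0 le_rfl
        rw [proj_expand_smul, hE, ← hb, ← ha] at h0
        have hbpos : 0 < b := by nlinarith
        have ht := hkey (b / a) (le_of_lt (div_pos hbpos hpos))
        rw [proj_expand_smul, hE, ← hb, ← ha] at ht
        have hfe : (b / a) ^ 2 * a = b ^ 2 / a := by field_simp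
        rw [hfe] at ht
        have hsimp : b ^ 2 / a - 2 * (b / a) * b = -(b ^ 2 / a) := by
          field_simp; ring
        rw [hsimp] at ht
        have hfe2 : b ^ 2 / a * a = b ^ 2 := div_mul_cancel₀ _ (ne_of_gt hpos)
        have ht2 := mul_le_mul_of_nonneg_right
          (show a - 2 * b ≤ -(b ^ 2 / a) by linarith) hpos.le
        have hsq : (a - b) ^ 2 ≤ 0 := by nlinarith
        have hsq0 : (a - b) ^ 2 = 0 := le_antisymm hsq (sq_nonneg _)
        have := pow_eq_zero_iff (two_ne_zero).symm.symm |>.mp hsq0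
        linarith [sub_eq_zero.mp this]
    refine ⟨hC, hab, fun Z hZ hZeq => ?_⟩
    have hZ2 := hmin Z hZ
    rw [hE, proj_expand_aux Z Y, hZeq] at hZ2
    have h1 : ‖Z‖ ^ 2 ≤ a := by nlinarith
    nlinarith [norm_nonneg Z, norm_nonneg Yhat, h1]
  · rintro ⟨hC, heq, hmax⟩
    refine ⟨hC, fun Z hZ => ?_⟩
    have hE : ‖Yhat - Y‖ ^ 2 = ‖Y‖ ^ 2 - ‖Yhat‖ ^ 2 := by
      rw [proj_expand_aux, heq]; ring
    rw [hE, proj_expand_aux Z Y]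
    rcases le_or_gt (inner ℝ Y Z : ℝ) 0 with hc | hc
    · nlinarith [sq_nonneg ‖Yhat‖, sq_nonneg ‖Z‖]
    · have hZne : Z ≠ 0 := by
        intro h; rw [h] at hc; simp at hc
      have hs : (0:ℝ) < ‖Z‖ ^ 2 := pow_pos (norm_pos_iff.mpr hZne) 2
      set c := (inner ℝ Y Z : ℝ) with hcdef
      set t := c / ‖Z‖ ^ 2 with htdef
      have ht0 : 0 ≤ t := le_of_lt (div_pos hc hs)
      have hWinner : (inner ℝ Y (t • Z) : ℝ) = ‖t • Z‖ ^ 2 := by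
        rw [real_inner_smul_right, norm_smul, mul_pow, Real.norm_eq_abs, sq_abs,
          htdef, ← hcdef]
        field_simp
      have hW : ‖t • Z‖ ≤ ‖Yhat‖ := hmax _ (hcone t ht0 Z hZ) hWinner
      have hWsq : ‖t • Z‖ ^ 2 ≤ ‖Yhat‖ ^ 2 := by
        nlinarith [norm_nonneg (t • Z), norm_nonneg Yhat]
      have hWval : ‖t • Z‖ ^ 2 = c ^ 2 / ‖Z‖ ^ 2 := by
        rw [norm_smul, mul_pow, Real.norm_eq_abs, sq_abs, htdef]
        field_simp
      rw [hWval] at hWsq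
      have h5 := (div_le_iff₀ hs).mp hWsq
      nlinarith [sq_nonneg (‖Z‖ ^ 2 - c)]
end

section
/- Let Û be the n × s matrix of top s left singular vectors of an n × m real matrix A of rank r > s. Then ÛÛᵀA is a best Frobenius-norm approximation of A among all n × m matrices of rank at most s; that is, ‖A − ÛÛᵀA‖ ≤ ‖A − B‖ for every B of rank ≤ s. -/
open Matrix

/-- The Frobenius (trace) inner product on real matrices. -/
noncomputable def frobInner {n m : ℕ} (A B : Matrix (Fin n) (Fin m) ℝ) : ℝ :=
  ∑ i, ∑ j, A i j * B i j

/-- The squared Frobenius norm. -/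
noncomputable def frobSq {n m : ℕ} (A : Matrix (Fin n) (Fin m) ℝ) : ℝ := frobInner A A

/-- The Frobenius norm. -/
noncomputable def frobNorm {n m : ℕ} (A : Matrix (Fin n) (Fin m) ℝ) : ℝ :=
  Real.sqrt (frobSq A)

/-- The `n × m` rectangular diagonal matrix with diagonal entries `σ`. -/
noncomputable def svdS {n m : ℕ} (σ : Fin (min n m) → ℝ) : Matrix (Fin n) (Fin m) ℝ :=
  Matrix.of fun i j =>
    if h : (i : ℕ) = (j : ℕ) then σ ⟨i, by have := i.isLt; have := j.isLt; omega⟩ else 0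

section EYaux

lemma ey_exists_proj {n m s : ℕ} (N : Matrix (Fin n) (Fin m) ℝ) (hN : N.rank ≤ s) :
    ∃ P : Matrix (Fin n) (Fin n) ℝ, Pᵀ = P ∧ P * P = P ∧ P.trace ≤ (s : ℝ) ∧ P * N = N := by
  classical
  set W : Submodule ℝ (EuclideanSpace ℝ (Fin n)) :=
    Submodule.span ℝ (Set.range (fun j => WithLp.toLp 2 (Nᵀ j) : Fin m → EuclideanSpace ℝ (Fin n))) with hW
  have hfr : Module.finrank ℝ W = N.rank := by
    have hWm : W = (Submodule.span ℝ (Set.range N.col)).map (((WithLp.linearEquiv 2 ℝ (Fin n → ℝ)).symm : (Fin n → ℝ) ≃ₗ[ℝ] EuclideanSpace ℝ (Fin n)) : (Fin n → ℝ) →ₗ[ℝ] EuclideanSpace ℝ (Fin n)) := by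
      rw [Submodule.map_span, ← Set.range_comp]; rfl
    rw [hWm, LinearEquiv.finrank_map_eq]; exact (N.rank_eq_finrank_span_cols).symm
  set d := Module.finrank ℝ W with hd
  obtain b := stdOrthonormalBasis ℝ W
  set v : Fin d → (Fin n → ℝ) := fun k => ((b k : W) : EuclideanSpace ℝ (Fin n)) with hv
  have horth : ∀ k l, (∑ i, v k i * v l i) = if k = l then (1:ℝ) else 0 := by
    intro k l
    have h2 := (orthonormal_iff_ite.mp b.orthonormal) k l
    have h3 : (inner ℝ (b k) (b l) : ℝ) = ∑ i, v k i * v l i := by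
      rw [show (inner ℝ (b k) (b l) : ℝ)
            = inner ℝ ((b k : W) : EuclideanSpace ℝ (Fin n)) ((b l : W) : EuclideanSpace ℝ (Fin n))
          from rfl, PiLp.inner_apply]
      simp [RCLike.inner_apply, starRingEnd_apply, hv]
      exact Finset.sum_congr rfl fun _ _ => mul_comm _ _
    rw [← h3, h2]
  have hexp : ∀ w : W, ∀ i : Fin n,
      ((w : EuclideanSpace ℝ (Fin n)) : Fin n → ℝ) i
        = ∑ k, (∑ l, v k l * ((w : EuclideanSpace ℝ (Fin n)) : Fin n → ℝ) l) * v k i := by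
    intro w i
    have h2 : ∀ k, b.repr w k = ∑ l, v k l * ((w : EuclideanSpace ℝ (Fin n)) : Fin n → ℝ) l := by
      intro k
      rw [b.repr_apply_apply]
      rw [show (inner ℝ (b k) w : ℝ)
            = inner ℝ ((b k : W) : EuclideanSpace ℝ (Fin n)) ((w : W) : EuclideanSpace ℝ (Fin n))
          from rfl, PiLp.inner_apply]
      simp [RCLike.inner_apply, starRingEnd_apply, hv]
      exact Finset.sum_congr rfl fun _ _ => mul_comm _ _
    have h3 : ((w : EuclideanSpace ℝ (Fin n)) : Fin n → ℝ)
        = ∑ k, b.repr w k • v k := by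
      conv_lhs => rw [← b.sum_repr w]
      rw [show ((((∑ k, b.repr w k • b k : W) : EuclideanSpace ℝ (Fin n))) : Fin n → ℝ)
            = W.subtype (∑ k, b.repr w k • b k) from rfl, map_sum]
      simp [hv]
    calc ((w : EuclideanSpace ℝ (Fin n)) : Fin n → ℝ) i
        = (∑ k, b.repr w k • v k) i := by rw [h3]
      _ = ∑ k, b.repr w k * v k i := by rw [Finset.sum_apply]; rfl
      _ = _ := by simp_rw [h2]; rfl
  refine ⟨Matrix.of fun i j => ∑ k, v k i * v k j, ?_, ?_, ?_, ?_⟩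
  · ext i j; simp [mul_comm]
  · ext i j
    simp only [Matrix.mul_apply, Matrix.of_apply]
    calc ∑ l, (∑ k, v k i * v k l) * (∑ k', v k' l * v k' j)
        = ∑ k, ∑ k', v k i * v k' j * (∑ l, v k l * v k' l) := by
          simp_rw [Finset.sum_mul, Finset.mul_sum]
          rw [Finset.sum_comm]
          congr 1; ext k
          rw [Finset.sum_comm]
          congr 1; ext k'
          congr 1; ext l; ring
      _ = ∑ k, v k i * v k j := by
          simp_rw [horth]
          simp
  · have ht : (Matrix.of fun i j => ∑ k, v k i * v k j).trace = (d : ℝ) := by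
      rw [Matrix.trace]
      simp only [Matrix.diag_apply, Matrix.of_apply]
      rw [Finset.sum_comm]
      have h1 : ∀ k : Fin d, (∑ i, v k i * v k i) = 1 := fun k => by simpa using horth k k
      simp [h1]
    rw [ht]
    exact_mod_cast hfr ▸ hN
  · ext i j
    have hcol : (WithLp.toLp 2 (Nᵀ j) : EuclideanSpace ℝ (Fin n)) ∈ W := Submodule.subset_span ⟨j, rfl⟩
    have h := hexp ⟨_, hcol⟩ i
    simp only [Matrix.mul_apply, Matrix.of_apply]
    calc ∑ l, (∑ k, v k i * v k l) * N l j
        = ∑ l, ∑ k, v k i * v k l * N l j := by simp_rw [Finset.sum_mul]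
      _ = ∑ k, ∑ l, v k i * v k l * N l j := Finset.sum_comm
      _ = ∑ k, (∑ l, v k l * N l j) * v k i := by
          refine Finset.sum_congr rfl fun k _ => ?_
          rw [Finset.sum_mul]
          exact Finset.sum_congr rfl fun l _ => by ring
      _ = N i j := h.symm

lemma ey_frobInner_eq_trace {n m : ℕ} (A B : Matrix (Fin n) (Fin m) ℝ) :
    frobInner A B = (Aᵀ * B).trace := by
  rw [frobInner, Matrix.trace]
  rw [Finset.sum_comm]
  exact Finset.sum_congr rfl fun j _ => by simp [Matrix.mul_apply]

lemma ey_frobSq_nonneg {n m : ℕ} (A : Matrix (Fin n) (Fin m) ℝ) : 0 ≤ frobSq A := by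
  simp only [frobSq, frobInner]
  apply Finset.sum_nonneg; intro i _
  apply Finset.sum_nonneg; intro j _
  exact mul_self_nonneg _

lemma ey_frobSq_mul_left {n m : ℕ} (U : Matrix (Fin n) (Fin n) ℝ) (hU : Uᵀ * U = 1)
    (M : Matrix (Fin n) (Fin m) ℝ) : frobSq (U * M) = frobSq M := by
  rw [frobSq, frobSq, ey_frobInner_eq_trace, ey_frobInner_eq_trace, Matrix.transpose_mul]
  rw [show Mᵀ * Uᵀ * (U * M) = Mᵀ * (Uᵀ * U) * M by simp only [Matrix.mul_assoc], hU,
    Matrix.mul_one]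

lemma ey_frobSq_mul_right {n m : ℕ} (V : Matrix (Fin m) (Fin m) ℝ) (hV : Vᵀ * V = 1)
    (M : Matrix (Fin n) (Fin m) ℝ) : frobSq (M * Vᵀ) = frobSq M := by
  rw [frobSq, frobSq, ey_frobInner_eq_trace, ey_frobInner_eq_trace, Matrix.transpose_mul,
    Matrix.transpose_transpose]
  rw [show V * Mᵀ * (M * Vᵀ) = V * (Mᵀ * M) * Vᵀ by simp only [Matrix.mul_assoc],
    Matrix.trace_mul_cycle, hV, Matrix.one_mul]

lemma ey_frobSq_proj_le {n m : ℕ} (P : Matrix (Fin n) (Fin n) ℝ) (hPt : Pᵀ = P)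
    (hPP : P * P = P) (X : Matrix (Fin n) (Fin m) ℝ) :
    frobSq ((1 - P) * X) ≤ frobSq X := by
  have hQt : (1 - P)ᵀ = 1 - P := by rw [Matrix.transpose_sub, Matrix.transpose_one, hPt]
  have hQQ : (1 - P) * (1 - P) = 1 - P := by
    simp only [Matrix.sub_mul, Matrix.mul_sub, hPP, Matrix.one_mul, Matrix.mul_one]
    abel
  have key : frobSq X = frobSq (P * X) + frobSq ((1 - P) * X) := by
    simp only [frobSq, ey_frobInner_eq_trace, Matrix.transpose_mul]
    have e1 : Xᵀ * Pᵀ * (P * X) = Xᵀ * (P * X) := by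
      rw [hPt, ← Matrix.mul_assoc, Matrix.mul_assoc Xᵀ P P, hPP, Matrix.mul_assoc]
    have e2 : Xᵀ * (1 - P)ᵀ * ((1 - P) * X) = Xᵀ * ((1 - P) * X) := by
      rw [hQt, ← Matrix.mul_assoc, Matrix.mul_assoc Xᵀ (1-P) (1-P), hQQ, Matrix.mul_assoc]
    rw [e1, e2, ← Matrix.trace_add, ← Matrix.mul_add, ← Matrix.add_mul]
    have h1 : P + (1 - P) = (1 : Matrix (Fin n) (Fin n) ℝ) := by abel
    rw [h1, Matrix.one_mul]
  rw [key]
  have := ey_frobSq_nonneg (P * X)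
  linarith

/-- Sum over `Fin m` of a function supported on indices `< min n m`. -/
lemma ey_sum_min {n m : ℕ} (g : Fin m → ℝ)
    (hg : ∀ j : Fin m, ¬((j : ℕ) < min n m) → g j = 0) :
    ∑ j, g j = ∑ k : Fin (min n m), g (Fin.castLE (min_le_right n m) k) := by
  classical
  rw [show (∑ k : Fin (min n m), g (Fin.castLE (min_le_right n m) k))
      = ∑ j ∈ Finset.univ.map ⟨Fin.castLE (min_le_right n m), Fin.castLE_injective _⟩, g j
    from (Finset.sum_map Finset.univ ⟨Fin.castLE (min_le_right n m), Fin.castLE_injective _⟩ g).symm]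
  refine (Finset.sum_subset (Finset.subset_univ _) fun j _ hj => hg j fun hlt => hj ?_).symm
  simp only [Finset.mem_map, Finset.mem_univ, Function.Embedding.coeFn_mk, true_and]
  exact ⟨⟨(j : ℕ), hlt⟩, by ext; simp⟩

lemma ey_mul_svdS_apply {n m : ℕ} (W : Matrix (Fin n) (Fin n) ℝ) (σ : Fin (min n m) → ℝ)
    (i : Fin n) (j : Fin m) :
    (W * svdS σ) i j = if h : (j : ℕ) < min n m
      then σ ⟨j, h⟩ * W i ⟨j, h.trans_le (min_le_left n m)⟩ else 0 := by
  rw [Matrix.mul_apply]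
  by_cases h : (j : ℕ) < min n m
  · rw [dif_pos h]
    rw [Finset.sum_eq_single (⟨(j : ℕ), h.trans_le (min_le_left n m)⟩ : Fin n)]
    · simp only [svdS, Matrix.of_apply]
      rw [dif_pos trivial]
      ring
    · intro k _ hk
      simp only [svdS, Matrix.of_apply]
      rw [dif_neg, mul_zero]
      intro hkj
      exact hk (by ext; exact hkj)
    · intro h'; exact absurd (Finset.mem_univ _) h'
  · rw [dif_neg h]
    refine Finset.sum_eq_zero fun k _ => ?_
    simp only [svdS, Matrix.of_apply]
    rw [dif_neg, mul_zero]
    intro hkj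
    exact h (by have := k.isLt; have := j.isLt; omega)

lemma ey_frobSq_mul_svdS {n m : ℕ} (W : Matrix (Fin n) (Fin n) ℝ) (σ : Fin (min n m) → ℝ) :
    frobSq (W * svdS σ) = ∑ k : Fin (min n m), σ k ^ 2 *
      ∑ i, (W i ⟨(k : ℕ), k.isLt.trans_le (min_le_left n m)⟩) ^ 2 := by
  rw [frobSq, frobInner, Finset.sum_comm]
  rw [ey_sum_min (fun j => ∑ i, (W * svdS σ) i j * (W * svdS σ) i j) (fun j hj => by
    refine Finset.sum_eq_zero fun i _ => ?_
    rw [ey_mul_svdS_apply, dif_neg hj, mul_zero])]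
  refine Finset.sum_congr rfl fun k _ => ?_
  rw [Finset.mul_sum]
  refine Finset.sum_congr rfl fun i _ => ?_
  rw [ey_mul_svdS_apply, dif_pos (by simpa using k.isLt)]
  simp only [Fin.coe_castLE, Fin.eta]
  ring



lemma ey_weight {n m s : ℕ} (hs : s < min n m) (σ : Fin (min n m) → ℝ) (hmono : Antitone σ)
    (hnn : ∀ i, 0 ≤ σ i) (Q : Fin n → ℝ) (hQ0 : ∀ j, 0 ≤ Q j) (hQ1 : ∀ j, Q j ≤ 1)
    (hQs : (n : ℝ) - s ≤ ∑ j, Q j) :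
    ∑ k : Fin (min n m), (if (k : ℕ) < s then 0 else σ k ^ 2)
      ≤ ∑ k : Fin (min n m), σ k ^ 2 * Q ⟨(k : ℕ), k.isLt.trans_le (min_le_left n m)⟩ := by
  classical
  set q : Fin (min n m) → ℝ := fun k => Q ⟨(k : ℕ), k.isLt.trans_le (min_le_left n m)⟩ with hq
  -- cardinality of the upper filter
  have hcard : (Finset.univ.filter fun k : Fin (min n m) => ((k : ℕ) < s)).card = s := by
    rw [show (Finset.univ.filter fun k : Fin (min n m) => ((k : ℕ) < s))
        = Finset.univ.map ⟨Fin.castLE hs.le, Fin.castLE_injective _⟩ by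
      ext x
      simp only [Finset.mem_filter, Finset.mem_univ, true_and, Finset.mem_map,
        Function.Embedding.coeFn_mk]
      constructor
      · intro hx; exact ⟨⟨(x : ℕ), hx⟩, by ext; simp⟩
      · rintro ⟨y, rfl⟩; simpa using y.isLt]
    simp
  have hcard' : (Finset.univ.filter fun k : Fin (min n m) => ¬((k : ℕ) < s)).card = min n m - s := by
    have h := Finset.card_filter_add_card_filter_not
      (s := (Finset.univ : Finset (Fin (min n m)))) (p := fun k : Fin (min n m) => ((k : ℕ) < s))
    rw [hcard, Finset.card_univ, Fintype.card_fin] at h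
    omega
  -- sum of q bounded below
  have hqsum : ((min n m : ℕ) : ℝ) - s ≤ ∑ k : Fin (min n m), q k := by
    set emb : Fin (min n m) ↪ Fin n :=
      ⟨fun k => ⟨(k : ℕ), k.isLt.trans_le (min_le_left n m)⟩,
        fun a b h => by ext; simpa using congrArg Fin.val h⟩ with hemb
    set t := Finset.univ.map emb with htdef
    have hsub : t ⊆ Finset.univ := Finset.subset_univ _
    have hsplit : ∑ j ∈ Finset.univ \ t, Q j + ∑ j ∈ t, Q j = ∑ j : Fin n, Q j :=
      Finset.sum_sdiff hsub
    have hmap : ∑ j ∈ t, Q j = ∑ k : Fin (min n m), q k := Finset.sum_map _ _ _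
    have hrest : ∑ j ∈ Finset.univ \ t, Q j ≤ ((n - min n m : ℕ) : ℝ) := by
      calc ∑ j ∈ Finset.univ \ t, Q j ≤ (Finset.univ \ t).card • (1 : ℝ) :=
            Finset.sum_le_card_nsmul _ _ _ fun j _ => hQ1 j
        _ = ((n - min n m : ℕ) : ℝ) := by
            rw [Finset.card_sdiff_of_subset hsub, Finset.card_univ, Fintype.card_fin,
              Finset.card_map, Finset.card_univ, Fintype.card_fin]
            simp
    have hNn : min n m ≤ n := min_le_left n m
    have hcast : ((n - min n m : ℕ) : ℝ) = (n : ℝ) - (min n m : ℕ) := by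
      rw [Nat.cast_sub hNn]
    rw [hcast] at hrest
    linarith [hsplit, hmap, hQs]
  set t2 := σ ⟨s, hs⟩ with ht2
  have ht2nn : 0 ≤ t2 := hnn _
  have hbound : ∀ k : Fin (min n m),
      (if (k : ℕ) < s then 0 else σ k ^ 2)
        + (t2 ^ 2 * q k - (if (k : ℕ) < s then 0 else t2 ^ 2)) ≤ σ k ^ 2 * q k := by
    intro k
    by_cases hk : (k : ℕ) < s
    · rw [if_pos hk, if_pos hk]
      have h1 : t2 ≤ σ k := hmono (show k ≤ (⟨s, hs⟩ : Fin (min n m)) by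
        simp only [Fin.le_def]; omega)
      have h2 : t2 ^ 2 ≤ σ k ^ 2 := pow_le_pow_left₀ ht2nn h1 2
      nlinarith [hQ0 ⟨(k : ℕ), k.isLt.trans_le (min_le_left n m)⟩]
    · rw [if_neg hk, if_neg hk]
      have h1 : σ k ≤ t2 := hmono (show (⟨s, hs⟩ : Fin (min n m)) ≤ k by
        simp only [Fin.le_def]; omega)
      have h2 : σ k ^ 2 ≤ t2 ^ 2 := pow_le_pow_left₀ (hnn k) h1 2
      have h3 : q k ≤ 1 := hQ1 _
      nlinarith
  have hsumbound := Finset.sum_le_sum fun k (_ : k ∈ Finset.univ) => hbound k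
  rw [Finset.sum_add_distrib] at hsumbound
  have hsum2 : ∑ k : Fin (min n m), (t2 ^ 2 * q k - (if (k : ℕ) < s then 0 else t2 ^ 2))
      = t2 ^ 2 * (∑ k : Fin (min n m), q k) - t2 ^ 2 * (((min n m : ℕ) : ℝ) - s) := by
    rw [Finset.sum_sub_distrib, ← Finset.mul_sum]
    congr 1
    rw [Finset.sum_ite, Finset.sum_const, Finset.sum_const, hcard']
    have h5 : ((min n m - s : ℕ) : ℝ) = ((min n m : ℕ) : ℝ) - s := Nat.cast_sub hs.le
    simp only [smul_eq_mul, mul_zero, zero_add, nsmul_eq_mul, smul_zero, h5, Finset.sum_const]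
    ring
  rw [hsum2] at hsumbound
  have hpos : 0 ≤ t2 ^ 2 * (∑ k : Fin (min n m), q k) - t2 ^ 2 * (((min n m : ℕ) : ℝ) - s) := by
    have := mul_le_mul_of_nonneg_left hqsum (sq_nonneg t2)
    linarith
  linarith

end EYaux

/-- Eckart–Young (Frobenius norm): if `Û` is the matrix of top `s` left singular
vectors of `A ∈ ℝ^{n×m}` of rank `r > s`, then `ÛÛᵀA` is a best rank-`≤ s`
approximation of `A`: `‖A − ÛÛᵀA‖ ≤ ‖A − B‖` for every `B` with `rank B ≤ s`. -/
theorem eckart_young_frobenius {n m s r : ℕ} (hsr : s < r) (hsn : s ≤ n)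
    (A : Matrix (Fin n) (Fin m) ℝ) (hrank : A.rank = r)
    (U₀ : Matrix (Fin n) (Fin n) ℝ) (V₀ : Matrix (Fin m) (Fin m) ℝ)
    (σ : Fin (min n m) → ℝ) (hU₀ : U₀ᵀ * U₀ = 1) (hV₀ : V₀ᵀ * V₀ = 1)
    (hmono : Antitone σ) (hnn : ∀ i, 0 ≤ σ i) (hA : A = U₀ * svdS σ * V₀ᵀ) :
    ∀ B : Matrix (Fin n) (Fin m) ℝ, B.rank ≤ s →
      frobNorm (A - (U₀.submatrix id (Fin.castLE hsn)) * (U₀.submatrix id (Fin.castLE hsn))ᵀ * A) ≤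
        frobNorm (A - B) := by
  intro B hB
  classical
  have hrn : A.rank ≤ n := A.rank_le_height
  have hrm : A.rank ≤ m := A.rank_le_width
  have hsmin : s < min n m := by omega
  have hU₀' : U₀ * U₀ᵀ = 1 := mul_eq_one_comm.mp hU₀
  have hV₀' : V₀ * V₀ᵀ = 1 := mul_eq_one_comm.mp hV₀
  set Uh := U₀.submatrix id (Fin.castLE hsn) with hUhat
  set σ'' : Fin (min n m) → ℝ := fun k => if (k : ℕ) < s then σ k else 0 with hσ''
  set σ' : Fin (min n m) → ℝ := fun k => if (k : ℕ) < s then 0 else σ k with hσ'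
  have hUtU : Uhᵀ * U₀ = (1 : Matrix (Fin n) (Fin n) ℝ).submatrix (Fin.castLE hsn) id := by
    ext k j
    have h : (U₀ᵀ * U₀) (Fin.castLE hsn k) j
        = (1 : Matrix (Fin n) (Fin n) ℝ) (Fin.castLE hsn k) j := by rw [hU₀]
    rw [Matrix.submatrix_apply, id_eq]
    simpa [hUhat, Matrix.mul_apply, Matrix.submatrix_apply] using h
  have hUD : Uh * ((1 : Matrix (Fin n) (Fin n) ℝ).submatrix (Fin.castLE hsn) id)
      = U₀ * Matrix.diagonal (fun j : Fin n => if (j : ℕ) < s then (1 : ℝ) else 0) := by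
    ext i j
    rw [Matrix.mul_apply, Matrix.mul_diagonal]
    by_cases h : (j : ℕ) < s
    · rw [Finset.sum_eq_single (⟨(j : ℕ), h⟩ : Fin s)]
      · have he : Fin.castLE hsn (⟨(j : ℕ), h⟩ : Fin s) = j := by ext; simp
        simp [hUhat, Matrix.submatrix_apply, he, Matrix.one_apply, if_pos h]
      · intro k _ hk
        have hne : Fin.castLE hsn k ≠ j := by
          intro hc; apply hk; ext; simpa using congrArg Fin.val hc
        rw [Matrix.submatrix_apply, id_eq, Matrix.one_apply_ne hne, mul_zero]
      · intro h'; exact absurd (Finset.mem_univ _) h'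
    · rw [if_neg h, mul_zero]
      refine Finset.sum_eq_zero fun k _ => ?_
      have hne : Fin.castLE hsn k ≠ j := by
        intro hc
        apply h
        have hlt := k.isLt
        have h2 := congrArg Fin.val hc
        simp at h2
        omega
      rw [Matrix.submatrix_apply, id_eq, Matrix.one_apply_ne hne, mul_zero]
  have hDS : Matrix.diagonal (fun j : Fin n => if (j : ℕ) < s then (1 : ℝ) else 0) * svdS σ
      = svdS σ'' := by
    ext i j
    rw [Matrix.diagonal_mul]
    simp only [svdS, Matrix.of_apply, hσ'']
    by_cases h : (i : ℕ) = (j : ℕ)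
    · rw [dif_pos h, dif_pos h]
      by_cases h2 : (i : ℕ) < s
      · rw [if_pos h2, if_pos h2, one_mul]
      · rw [if_neg h2, if_neg h2, zero_mul]
    · rw [dif_neg h, dif_neg h, mul_zero]
  have hdiff : svdS σ - svdS σ'' = svdS σ' := by
    ext i j
    simp only [Matrix.sub_apply, svdS, Matrix.of_apply, hσ'', hσ']
    by_cases h : (i : ℕ) = (j : ℕ)
    · rw [dif_pos h, dif_pos h, dif_pos h]
      by_cases h2 : (i : ℕ) < s
      · rw [if_pos h2, if_pos h2]; ring
      · rw [if_neg h2, if_neg h2]; ring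
    · rw [dif_neg h, dif_neg h, dif_neg h]; ring
  have hP1 : Uh * Uhᵀ * A = U₀ * (svdS σ'' * V₀ᵀ) := by
    rw [hA]
    simp only [Matrix.mul_assoc]
    rw [← Matrix.mul_assoc Uhᵀ U₀ (svdS σ * V₀ᵀ), hUtU]
    rw [← Matrix.mul_assoc Uh _ _, hUD]
    rw [Matrix.mul_assoc U₀ _ _, ← Matrix.mul_assoc _ (svdS σ) V₀ᵀ, hDS]
  have hLmat : A - Uh * Uhᵀ * A = U₀ * (svdS σ' * V₀ᵀ) := by
    rw [hP1, hA, Matrix.mul_assoc U₀ (svdS σ) V₀ᵀ, ← Matrix.mul_sub, ← Matrix.sub_mul, hdiff]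
  have hLsq : frobSq (A - Uh * Uhᵀ * A)
      = ∑ k : Fin (min n m), (if (k : ℕ) < s then 0 else σ k ^ 2) := by
    rw [hLmat, ey_frobSq_mul_left U₀ hU₀, ey_frobSq_mul_right V₀ hV₀]
    rw [show svdS σ' = (1 : Matrix (Fin n) (Fin n) ℝ) * svdS σ' from (Matrix.one_mul _).symm,
      ey_frobSq_mul_svdS]
    refine Finset.sum_congr rfl fun k _ => ?_
    have hone : (∑ i, ((1 : Matrix (Fin n) (Fin n) ℝ) i
        (⟨(k : ℕ), k.isLt.trans_le (min_le_left n m)⟩ : Fin n)) ^ 2) = 1 := by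
      rw [Finset.sum_eq_single (⟨(k : ℕ), k.isLt.trans_le (min_le_left n m)⟩ : Fin n)]
      · simp [Matrix.one_apply]
      · intro i _ hij; simp [Matrix.one_apply_ne hij]
      · intro h'; exact absurd (Finset.mem_univ _) h'
    rw [hone, mul_one, hσ']
    by_cases h2 : (k : ℕ) < s
    · simp [h2]
    · simp [h2]
  -- right-hand side
  have hBrank : (B * V₀).rank ≤ s := le_trans (Matrix.rank_mul_le_left B V₀) hB
  obtain ⟨P, hPt, hPP, htr, hPN⟩ := ey_exists_proj (B * V₀) hBrank
  have hQt : (1 - P)ᵀ = 1 - P := by rw [Matrix.transpose_sub, Matrix.transpose_one, hPt]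
  have hQQ : (1 - P) * (1 - P) = 1 - P := by
    simp only [Matrix.sub_mul, Matrix.mul_sub, hPP, Matrix.one_mul, Matrix.mul_one]
    abel
  have hAV : A * V₀ = U₀ * svdS σ := by
    rw [hA, Matrix.mul_assoc (U₀ * svdS σ) V₀ᵀ V₀, hV₀, Matrix.mul_one]
  set R := (1 - P) * U₀ with hR
  set T := P * U₀ with hT
  have hRRe : Rᵀ * R = U₀ᵀ * ((1 - P) * U₀) := by
    rw [hR, Matrix.transpose_mul, hQt, Matrix.mul_assoc, ← Matrix.mul_assoc (1 - P) (1 - P) U₀,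
      hQQ]
  have hTTe : Tᵀ * T = U₀ᵀ * (P * U₀) := by
    rw [hT, Matrix.transpose_mul, hPt, Matrix.mul_assoc, ← Matrix.mul_assoc P P U₀, hPP]
  have hsumid : Rᵀ * R + Tᵀ * T = 1 := by
    rw [hRRe, hTTe, ← Matrix.mul_add, ← Matrix.add_mul]
    have h1 : (1 - P) + P = (1 : Matrix (Fin n) (Fin n) ℝ) := by abel
    rw [h1, Matrix.one_mul, hU₀]
  set Q : Fin n → ℝ := fun j => ∑ i, (R i j) ^ 2 with hQdef
  have hRRjj : ∀ j, (Rᵀ * R) j j = Q j := by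
    intro j
    rw [Matrix.mul_apply]
    exact Finset.sum_congr rfl fun i _ => by rw [Matrix.transpose_apply]; ring
  have hTTjj : ∀ j, 0 ≤ (Tᵀ * T) j j := by
    intro j
    rw [Matrix.mul_apply]
    exact Finset.sum_nonneg fun i _ => by rw [Matrix.transpose_apply]; exact mul_self_nonneg _
  have hQ1 : ∀ j, Q j ≤ 1 := by
    intro j
    have h := congrFun (congrFun hsumid j) j
    simp only [Matrix.add_apply, Matrix.one_apply_eq] at h
    have h2 := hTTjj j
    rw [hRRjj j] at h
    linarith
  have hQ0 : ∀ j, 0 ≤ Q j := fun j => Finset.sum_nonneg fun i _ => sq_nonneg _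
  have hQsum : (n : ℝ) - s ≤ ∑ j, Q j := by
    have h1 : ∑ j, Q j = Matrix.trace (Rᵀ * R) := by
      rw [Matrix.trace]
      simp only [Matrix.diag_apply]
      exact (Finset.sum_congr rfl fun j _ => hRRjj j).symm
    have h2 : Matrix.trace (Rᵀ * R) + Matrix.trace (Tᵀ * T) = (n : ℝ) := by
      rw [← Matrix.trace_add, hsumid]
      simp [Matrix.trace_one]
    have h3 : Matrix.trace (Tᵀ * T) = Matrix.trace P := by
      rw [hTTe, ← Matrix.mul_assoc, Matrix.trace_mul_cycle, hU₀', Matrix.one_mul]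
    rw [h1]
    rw [h3] at h2
    linarith
  have e1 : frobSq (A - B) = frobSq ((A - B) * V₀) := by
    have h := ey_frobSq_mul_right (V := V₀ᵀ) (by rw [Matrix.transpose_transpose]; exact hV₀')
      (A - B)
    rw [Matrix.transpose_transpose] at h
    exact h.symm
  have e2 : (A - B) * V₀ = U₀ * svdS σ - B * V₀ := by rw [Matrix.sub_mul, hAV]
  have e3 : (1 - P) * (U₀ * svdS σ - B * V₀) = R * svdS σ := by
    rw [Matrix.mul_sub]
    have h4 : (1 - P) * (B * V₀) = 0 := by
      rw [Matrix.sub_mul, Matrix.one_mul, hPN, sub_self]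
    rw [h4, sub_zero, hR, Matrix.mul_assoc]
  have e4 : frobSq (R * svdS σ) ≤ frobSq (A - B) := by
    rw [e1, e2, ← e3]
    exact ey_frobSq_proj_le P hPt hPP _
  have e5 : frobSq (R * svdS σ) = ∑ k : Fin (min n m),
      σ k ^ 2 * Q ⟨(k : ℕ), k.isLt.trans_le (min_le_left n m)⟩ := by
    rw [ey_frobSq_mul_svdS]
  have hchain : ∑ k : Fin (min n m), (if (k : ℕ) < s then 0 else σ k ^ 2) ≤ frobSq (A - B) :=
    le_trans (ey_weight hsmin σ hmono hnn Q hQ0 hQ1 hQsum) (e5 ▸ e4)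
  rw [frobNorm, frobNorm]
  apply Real.sqrt_le_sqrt
  rw [hLsq]
  exact hchain
end
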